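/- (Generator function reduction for conic MIPs with block structure.) For ℓ = 1,…,L, let K^ℓ ⊆ ℝ^{n₁^ℓ + n₂^ℓ} be a regular cone, A^ℓ ∈ ℝ^{m×n₁^ℓ}, G^ℓ ∈ ℝ^{m×n₂^ℓ}, c^ℓ ∈ ℝ^{n₁^ℓ}, d^ℓ ∈ ℝ^{n₂^ℓ}, and let a_i^ℓ, g_i^ℓ denote the i-th rows of A^ℓ, G^ℓ. Fix α ∈ ℝ^m and ω ∈ ℝ^m, and let E' = {ℓ : (c^ℓ, d^ℓ) − [A^ℓ; G^ℓ]^Tα ∈ K^ℓ_* and (a_i^ℓ, g_i^ℓ) ∈ K^ℓ_* for all i = 1,…,m}. Then the supremum of Σ_{ℓ=1}^L [((A^ℓ)^Tα − c^ℓ)^T x^ℓ + ((G^ℓ)^Tα − d^ℓ)^T y^ℓ] over all (x^ℓ, y^ℓ) ∈ K^ℓ ∩ (ℤ^{n₁^ℓ} × ℝ^{n₂^ℓ}), ℓ = 1,…,L, with Σ_{ℓ=1}^L (A^ℓ x^ℓ + G^ℓ y^ℓ) ≤ ω, is unchanged if one additionally imposes (x^ℓ, y^ℓ) = 0 for every ℓ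 ∈ E'. -/

import Mathlib

open Matrix

/-- A regular cone in `ℝ^{n₁} × ℝ^{n₂}`: closed, convex, a cone, pointed,
and full-dimensional. -/
def IsRegularConeP {n₁ n₂ : ℕ} (K : Set ((Fin n₁ → ℝ) × (Fin n₂ → ℝ))) : Prop :=
  IsClosed K ∧ Convex ℝ K ∧ (∀ p ∈ K, ∀ t : ℝ, 0 ≤ t → t • p ∈ K) ∧
    K ∩ (-K) = {0} ∧ (interior K).Nonempty

/-- The dual cone of `K ⊆ ℝ^{n₁} × ℝ^{n₂}`. -/
def dualConeP {n₁ n₂ : ℕ} (K : Set ((Fin n₁ → ℝ) × (Fin n₂ → ℝ))) :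
    Set ((Fin n₁ → ℝ) × (Fin n₂ → ℝ)) :=
  {q | ∀ p ∈ K, 0 ≤ p.1 ⬝ᵥ q.1 + p.2 ⬝ᵥ q.2}

/-- Generator function reduction for conic MIPs with block structure: the supremum
defining the generator function is unchanged when the blocks in `E'` are forced to `0`. -/
theorem generator_block_reduction {L m : ℕ} (n₁ n₂ : Fin L → ℕ)
    (K : ∀ ℓ, Set ((Fin (n₁ ℓ) → ℝ) × (Fin (n₂ ℓ) → ℝ)))
    (hK : ∀ ℓ, IsRegularConeP (K ℓ))
    (A : ∀ ℓ, Matrix (Fin m) (Fin (n₁ ℓ)) ℝ) (G : ∀ ℓ, Matrix (Fin m) (Fin (n₂ ℓ)) ℝ)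
    (c : ∀ ℓ, Fin (n₁ ℓ) → ℝ) (d : ∀ ℓ, Fin (n₂ ℓ) → ℝ)
    (α ω : Fin m → ℝ)
    (E' : Set (Fin L))
    (hE' : E' = {ℓ | (c ℓ - (A ℓ)ᵀ.mulVec α, d ℓ - (G ℓ)ᵀ.mulVec α) ∈ dualConeP (K ℓ) ∧
      ∀ i : Fin m, ((fun j => A ℓ i j, fun j => G ℓ i j) ∈ dualConeP (K ℓ))}) :
    sSup ((fun z : ℝ => (z : EReal)) '' {z : ℝ |
        ∃ (x : ∀ ℓ, Fin (n₁ ℓ) → ℝ) (y : ∀ ℓ, Fin (n₂ ℓ) → ℝ),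
          (∀ ℓ, (x ℓ, y ℓ) ∈ K ℓ) ∧ (∀ ℓ, ∀ i, ∃ k : ℤ, x ℓ i = (k : ℝ)) ∧
          (∀ i, ∑ ℓ, ((A ℓ).mulVec (x ℓ) i + (G ℓ).mulVec (y ℓ) i) ≤ ω i) ∧
          z = ∑ ℓ, (((A ℓ)ᵀ.mulVec α - c ℓ) ⬝ᵥ x ℓ + ((G ℓ)ᵀ.mulVec α - d ℓ) ⬝ᵥ y ℓ)}) =
      sSup ((fun z : ℝ => (z : EReal)) '' {z : ℝ |
        ∃ (x : ∀ ℓ, Fin (n₁ ℓ) → ℝ) (y : ∀ ℓ, Fin (n₂ ℓ) → ℝ),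
          (∀ ℓ, (x ℓ, y ℓ) ∈ K ℓ) ∧ (∀ ℓ, ∀ i, ∃ k : ℤ, x ℓ i = (k : ℝ)) ∧
          (∀ i, ∑ ℓ, ((A ℓ).mulVec (x ℓ) i + (G ℓ).mulVec (y ℓ) i) ≤ ω i) ∧
          (∀ ℓ ∈ E', x ℓ = 0 ∧ y ℓ = 0) ∧
          z = ∑ ℓ, (((A ℓ)ᵀ.mulVec α - c ℓ) ⬝ᵥ x ℓ + ((G ℓ)ᵀ.mulVec α - d ℓ) ⬝ᵥ y ℓ)}) := by
  classical
  apply le_antisymm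
  · -- zero out blocks in E'
    apply sSup_le
    rintro e ⟨z, ⟨x, y, hKxy, hint, hcon, hz⟩, rfl⟩
    set x' : ∀ ℓ, Fin (n₁ ℓ) → ℝ := fun ℓ => if ℓ ∈ E' then 0 else x ℓ with hx'
    set y' : ∀ ℓ, Fin (n₂ ℓ) → ℝ := fun ℓ => if ℓ ∈ E' then 0 else y ℓ with hy'
    have hzeroK : ∀ ℓ, ((0, 0) : (Fin (n₁ ℓ) → ℝ) × (Fin (n₂ ℓ) → ℝ)) ∈ K ℓ := by
      intro ℓ
      obtain ⟨p, hp⟩ := (hK ℓ).2.2.2.2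
      have hp' : p ∈ K ℓ := interior_subset hp
      have := (hK ℓ).2.2.1 p hp' 0 le_rfl
      simp only [zero_smul] at this
      exact this
    -- for ℓ ∈ E', rows nonneg and objective term nonpositive
    have hrow : ∀ ℓ ∈ E', ∀ i, 0 ≤ (A ℓ).mulVec (x ℓ) i + (G ℓ).mulVec (y ℓ) i := by
      intro ℓ hℓ i
      rw [hE'] at hℓ
      have := hℓ.2 i (x ℓ, y ℓ) (hKxy ℓ)
      simpa [Matrix.mulVec, dotProduct_comm] using this
    have hobj : ∀ ℓ ∈ E',
        ((A ℓ)ᵀ.mulVec α - c ℓ) ⬝ᵥ x ℓ + ((G ℓ)ᵀ.mulVec α - d ℓ) ⬝ᵥ y ℓ ≤ 0 := by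
      intro ℓ hℓ
      rw [hE'] at hℓ
      have h := hℓ.1 (x ℓ, y ℓ) (hKxy ℓ)
      simp only at h
      have h1 : (x ℓ) ⬝ᵥ (c ℓ - (A ℓ)ᵀ.mulVec α) = ((c ℓ) - (A ℓ)ᵀ.mulVec α) ⬝ᵥ x ℓ :=
        dotProduct_comm _ _
      have h2 : (y ℓ) ⬝ᵥ (d ℓ - (G ℓ)ᵀ.mulVec α) = ((d ℓ) - (G ℓ)ᵀ.mulVec α) ⬝ᵥ y ℓ :=
        dotProduct_comm _ _
      rw [h1, h2, sub_dotProduct, sub_dotProduct] at h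
      rw [sub_dotProduct, sub_dotProduct]
      linarith
    set z' : ℝ := ∑ ℓ, (((A ℓ)ᵀ.mulVec α - c ℓ) ⬝ᵥ x' ℓ + ((G ℓ)ᵀ.mulVec α - d ℓ) ⬝ᵥ y' ℓ)
      with hz'
    have hzz' : z ≤ z' := by
      rw [hz, hz']
      apply Finset.sum_le_sum
      intro ℓ _
      by_cases h : ℓ ∈ E'
      · simp only [hx', hy', if_pos h]
        simpa using hobj ℓ h
      · simp [hx', hy', if_neg h]
    have hmem : ((z' : ℝ) : EReal) ∈ ((fun z : ℝ => (z : EReal)) '' {z : ℝ |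
        ∃ (x : ∀ ℓ, Fin (n₁ ℓ) → ℝ) (y : ∀ ℓ, Fin (n₂ ℓ) → ℝ),
          (∀ ℓ, (x ℓ, y ℓ) ∈ K ℓ) ∧ (∀ ℓ, ∀ i, ∃ k : ℤ, x ℓ i = (k : ℝ)) ∧
          (∀ i, ∑ ℓ, ((A ℓ).mulVec (x ℓ) i + (G ℓ).mulVec (y ℓ) i) ≤ ω i) ∧
          (∀ ℓ ∈ E', x ℓ = 0 ∧ y ℓ = 0) ∧
          z = ∑ ℓ, (((A ℓ)ᵀ.mulVec α - c ℓ) ⬝ᵥ x ℓ + ((G ℓ)ᵀ.mulVec α - d ℓ) ⬝ᵥ y ℓ)}) := by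
      refine ⟨z', ⟨x', y', ?_, ?_, ?_, ?_, rfl⟩, rfl⟩
      · intro ℓ
        by_cases h : ℓ ∈ E'
        · simpa [hx', hy', if_pos h] using hzeroK ℓ
        · simpa [hx', hy', if_neg h] using hKxy ℓ
      · intro ℓ i
        by_cases h : ℓ ∈ E'
        · exact ⟨0, by simp [hx', if_pos h]⟩
        · simpa [hx', if_neg h] using hint ℓ i
      · intro i
        refine le_trans ?_ (hcon i)
        apply Finset.sum_le_sum
        intro ℓ _
        by_cases h : ℓ ∈ E'
        · simp only [hx', hy', if_pos h]
          simpa using hrow ℓ h i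
        · simp [hx', hy', if_neg h]
      · intro ℓ h
        simp [hx', hy', if_pos h]
    exact le_trans (EReal.coe_le_coe_iff.mpr hzz') (le_sSup hmem)
  · apply sSup_le_sSup
    apply Set.image_mono
    rintro z ⟨x, y, h1, h2, h3, _, h5⟩
    exact ⟨x, y, h1, h2, h3, h5⟩
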